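/- An integral domain D that contains a nonzero nonunit comparable element is a t-local domain. -/
import Mathlib

open scoped nonZeroDivisors

/-- The `t`-closure of a fractional ideal `E` of an integral domain `D`:
the union (here: supremum, which is a directed union) of `F^v = (F⁻¹)⁻¹` over all
nonzero finitely generated fractional subideals `F` of `E`, viewed as a
`D`-submodule of the fraction field of `D`. -/
noncomputable def tClos (D : Type*) [CommRing D] [IsDomain D]
    (E : FractionalIdeal D⁰ (FractionRing D)) : Submodule D (FractionRing D) :=
  ⨆ F ∈ {F : FractionalIdeal D⁰ (FractionRing D) |
      F ≠ 0 ∧ F ≤ E ∧ (F : Submodule D (FractionRing D)).FG},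
    (((F⁻¹)⁻¹ : FractionalIdeal D⁰ (FractionRing D)) : Submodule D (FractionRing D))

/-- An integral ideal `I` of an integral domain `D` is a `t`-ideal if `I = I^t`. -/
def Ideal.IsT {D : Type*} [CommRing D] [IsDomain D] (I : Ideal D) : Prop :=
  ((I : FractionalIdeal D⁰ (FractionRing D)) : Submodule D (FractionRing D)) = tClos D I

/-- A nonzero element `c` of a domain `D` is comparable if for every `x ∈ D`,
either `cD ⊆ xD` or `xD ⊆ cD`. -/
def IsComparable {D : Type*} [CommRing D] (c : D) : Prop :=
  c ≠ 0 ∧ ∀ x : D, Ideal.span {c} ≤ Ideal.span {x} ∨ Ideal.span {x} ≤ Ideal.span {c}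

/-- An integral domain is `t`-local if it is local and its maximal ideal is a `t`-ideal. -/
def IsTLocal (A : Type*) [CommRing A] [IsDomain A] : Prop :=
  ∃ h : IsLocalRing A, Ideal.IsT (@IsLocalRing.maximalIdeal A _ h)

section Aux

variable {D : Type*} [CommRing D] [IsDomain D]

omit [IsDomain D] in
theorem IsComparable.cmp_dvd {c : D} (hc : IsComparable c) (x : D) : x ∣ c ∨ c ∣ x := by
  rcases hc.2 x with h | h
  · exact Or.inl (Ideal.span_singleton_le_span_singleton.mp h)
  · exact Or.inr (Ideal.span_singleton_le_span_singleton.mp h)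

/-- Any two divisors of a comparable element are comparable under divisibility. -/
theorem IsComparable.dvd_chain {c : D} (hc : IsComparable c) {x y : D} (hx : x ∣ c)
    (hy : y ∣ c) : x ∣ y ∨ y ∣ x := by
  obtain ⟨d, hd⟩ := hx
  obtain ⟨e, he⟩ := hy
  have he0 : e ≠ 0 := by rintro rfl; rw [mul_zero] at he; exact hc.1 he
  rcases hc.cmp_dvd (x * e) with ⟨f, hf⟩ | ⟨s, hs⟩
  · left
    refine ⟨f, mul_right_cancel₀ he0 ?_⟩
    rw [← he, hf]; ring
  · right
    refine ⟨s, mul_right_cancel₀ he0 ?_⟩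
    rw [hs, he]; ring

theorem isLocalRing_of_comparable {c : D} (hc : IsComparable c) (hcu : ¬ IsUnit c) :
    IsLocalRing D := by
  refine IsLocalRing.of_isUnit_or_isUnit_of_isUnit_add fun a b hab => ?_
  by_contra hne
  push_neg at hne
  obtain ⟨ha, hb⟩ := hne
  obtain ⟨u, hu⟩ := hab
  set x := (↑u⁻¹ : D) * a with hxdef
  set y := (↑u⁻¹ : D) * b with hydef
  have hxy : x + y = 1 := by
    rw [hxdef, hydef, ← mul_add, ← hu, Units.inv_mul]
  have hx : ¬ IsUnit x := fun h => ha (by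
    have : a = ↑u * x := by rw [hxdef, ← mul_assoc, Units.mul_inv, one_mul]
    rw [this]; exact (Units.isUnit u).mul h)
  have hy : ¬ IsUnit y := fun h => hb (by
    have : b = ↑u * y := by rw [hydef, ← mul_assoc, Units.mul_inv, one_mul]
    rw [this]; exact (Units.isUnit u).mul h)
  -- now derive a contradiction
  have key : ∀ p q : D, p + q = 1 → p ∣ q → IsUnit p := by
    intro p q hpq hdvd
    obtain ⟨k, hk⟩ := hdvd
    exact isUnit_of_dvd_one ⟨1 + k, by rw [mul_add, mul_one, ← hk, hpq]⟩
  have key' : x ∣ y ∨ y ∣ x → False := by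
    rintro (h | h)
    · exact hx (key x y hxy h)
    · exact hy (key y x (by rwa [add_comm]) h)
  rcases hc.cmp_dvd x with hxc | hcx
  · rcases hc.cmp_dvd y with hyc | hcy
    · exact key' (hc.dvd_chain hxc hyc)
    · exact key' (Or.inl (dvd_trans hxc hcy))
  · rcases hc.cmp_dvd y with hyc | hcy
    · exact key' (Or.inr (dvd_trans hyc hcx))
    · exact hcu (isUnit_of_dvd_one (by rw [← hxy]; exact dvd_add hcx hcy))

/-- Every finite set of nonunits has a common nonunit divisor (which divides `c`). -/
theorem exists_common_divisor {c : D} (hc : IsComparable c) (hcu : ¬ IsUnit c)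
    (t : Finset D) :
    (∀ x ∈ t, ¬ IsUnit x) → ∃ z : D, ¬ IsUnit z ∧ z ∣ c ∧ ∀ x ∈ t, z ∣ x := by
  classical
  induction t using Finset.induction_on with
  | empty => exact fun _ => ⟨c, hcu, dvd_refl c, by simp⟩
  | @insert a s ha ih =>
    intro ht
    obtain ⟨z, hz, hzc, hzs⟩ := ih fun x hx => ht x (Finset.mem_insert_of_mem hx)
    rcases hc.cmp_dvd a with hac | hca
    · rcases hc.dvd_chain hzc hac with hza | haz
      · exact ⟨z, hz, hzc, fun x hx => by
          rcases Finset.mem_insert.mp hx with rfl | hx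
          · exact hza
          · exact hzs x hx⟩
      · exact ⟨a, ht a (Finset.mem_insert_self a s), hac, fun x hx => by
          rcases Finset.mem_insert.mp hx with rfl | hx
          · exact dvd_refl _
          · exact dvd_trans haz (hzs x hx)⟩
    · exact ⟨z, hz, hzc, fun x hx => by
        rcases Finset.mem_insert.mp hx with rfl | hx
        · exact dvd_trans hzc hca
        · exact hzs x hx⟩

end Aux

/-- An integral domain that contains a nonzero nonunit comparable element is a
`t`-local domain. -/
theorem t_local_of_comparable {D : Type*} [CommRing D] [IsDomain D]
    (h : ∃ c : D, IsComparable c ∧ ¬ IsUnit c) : IsTLocal D := by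
  classical
  obtain ⟨c, hc, hcu⟩ := h
  haveI hloc : IsLocalRing D := isLocalRing_of_comparable hc hcu
  refine ⟨hloc, ?_⟩
  set K := FractionRing D
  set M := IsLocalRing.maximalIdeal D with hM
  have halg : Function.Injective (algebraMap D K) := IsFractionRing.injective D K
  refine le_antisymm ?_ ?_
  · -- M ≤ tClos
    rintro y hy
    rw [FractionalIdeal.coe_coeIdeal, IsLocalization.mem_coeSubmodule] at hy
    obtain ⟨x, hxM, rfl⟩ := hy
    by_cases hx0 : x = 0
    · subst hx0; rw [map_zero]; exact Submodule.zero_mem _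
    · set F : FractionalIdeal D⁰ K := ↑(Ideal.span {x}) with hF
      have hFmem : F ∈ {F : FractionalIdeal D⁰ K |
          F ≠ 0 ∧ F ≤ ↑M ∧ (F : Submodule D K).FG} := by
        refine ⟨?_, ?_, ?_⟩
        · rw [hF, FractionalIdeal.coeIdeal_ne_zero]
          exact fun hb => hx0 (by simpa [Ideal.span_eq_bot] using hb)
        · rw [hF]
          exact (FractionalIdeal.coeIdeal_le_coeIdeal K).mpr
            ((Ideal.span_singleton_le_iff_mem M).mpr hxM)
        · rw [hF, FractionalIdeal.coe_coeIdeal]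
          exact Submodule.FG.map _ (Submodule.fg_span_singleton x)
      have hFv : F = (F⁻¹)⁻¹ := by
        rw [hF, FractionalIdeal.coeIdeal_span_singleton,
          FractionalIdeal.spanSingleton_inv, FractionalIdeal.spanSingleton_inv, inv_inv]
      have hmem : algebraMap D K x ∈ ((F⁻¹)⁻¹ : FractionalIdeal D⁰ K) := by
        rw [← hFv, hF]
        exact FractionalIdeal.mem_coeIdeal_of_mem _ (Ideal.mem_span_singleton_self x)
      exact (le_iSup₂ (f := fun (F : FractionalIdeal D⁰ K) (_ : F ∈ {F : FractionalIdeal D⁰ K |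
          F ≠ 0 ∧ F ≤ ↑M ∧ (F : Submodule D K).FG}) =>
          (((F⁻¹)⁻¹ : FractionalIdeal D⁰ K) : Submodule D K)) F hFmem) hmem
  · -- tClos ≤ M
    refine iSup₂_le fun F hF => ?_
    obtain ⟨hF0, hFM, hFfg⟩ := hF
    -- F = ↑I for an ideal I ≤ M
    obtain ⟨I, rfl⟩ := FractionalIdeal.le_one_iff_exists_coeIdeal.mp
      (le_trans hFM FractionalIdeal.coeIdeal_le_one)
    have hIM : I ≤ M := (FractionalIdeal.coeIdeal_le_coeIdeal K).mp hFM
    have hIfg : I.FG := by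
      refine Submodule.fg_of_fg_map_injective (Algebra.linearMap D K) halg ?_
      rwa [FractionalIdeal.coe_coeIdeal] at hFfg
    obtain ⟨t, htI⟩ := hIfg
    have hz := exists_common_divisor hc hcu t (fun x hx => by
      have : x ∈ M := hIM (htI ▸ Ideal.subset_span hx)
      exact (IsLocalRing.mem_maximalIdeal x).mp this)
    obtain ⟨z, hzu, hzc, hzd⟩ := hz
    have hz0 : z ≠ 0 := fun h => hc.1 (by simpa [h] using hzc)
    have hIz : I ≤ Ideal.span {z} := by
      rw [← htI, Ideal.span_le]
      intro x hx
      exact Ideal.mem_span_singleton.mpr (hzd x hx)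
    set S : FractionalIdeal D⁰ K := ↑(Ideal.span ({z} : Set D)) with hS
    have hS0 : S ≠ 0 := by
      rw [hS, FractionalIdeal.coeIdeal_ne_zero]
      exact fun hb => hz0 (by simpa [Ideal.span_eq_bot] using hb)
    have hFS : (↑I : FractionalIdeal D⁰ K) ≤ S :=
      (FractionalIdeal.coeIdeal_le_coeIdeal K).mpr hIz
    have hSinv : S⁻¹ ≤ (↑I : FractionalIdeal D⁰ K)⁻¹ :=
      FractionalIdeal.inv_anti_mono hF0 hS0 hFS
    have hSinv0 : S⁻¹ ≠ 0 := by
      rw [hS, FractionalIdeal.coeIdeal_span_singleton, FractionalIdeal.spanSingleton_inv]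
      rw [FractionalIdeal.spanSingleton_ne_zero_iff]
      simpa using fun hzz => hz0 (halg (by simpa using hzz))
    have hFinv0 : (↑I : FractionalIdeal D⁰ K)⁻¹ ≠ 0 := fun hh => hSinv0 (le_antisymm
      (hh ▸ hSinv) (FractionalIdeal.zero_le _))
    have hvv : ((↑I : FractionalIdeal D⁰ K)⁻¹)⁻¹ ≤ (S⁻¹)⁻¹ :=
      FractionalIdeal.inv_anti_mono hSinv0 hFinv0 hSinv
    have hSvv : (S⁻¹)⁻¹ = S := by
      rw [hS, FractionalIdeal.coeIdeal_span_singleton,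
        FractionalIdeal.spanSingleton_inv, FractionalIdeal.spanSingleton_inv, inv_inv]
    have hSM : S ≤ ↑M := by
      rw [hS]
      exact (FractionalIdeal.coeIdeal_le_coeIdeal K).mpr
        ((Ideal.span_singleton_le_iff_mem M).mpr ((IsLocalRing.mem_maximalIdeal z).mpr hzu))
    exact FractionalIdeal.coe_le_coe.mpr (le_trans hvv (by rw [hSvv]; exact hSM))
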